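/- arXiv:2005.04422 — 2 statements merged into one kernel-verified Lean document; each statement's English description precedes it below -/
import Mathlib

section
/- For every complex polynomial q in the three real variables x, y, z, the operator norm of the restriction of Q_{1/N}(q(x,y,z)·(x²+y²+z²−1)) to the symmetric subspace Sym^N(ℂ²) tends to 0 as N → ∞. -/
open scoped ComplexConjugate
open MeasureTheory Filter Topology

noncomputable section

/-! ## Setting

`M₂(ℂ)^{⊗N}` is realized as matrices indexed by `Fin N → Fin 2`, acting on
`(ℂ²)^{⊗N} = EuclideanSpace ℂ (Fin N → Fin 2)`. -/

/-- `M₂(ℂ)^{⊗N}`, realized as matrices indexed by `Fin N → Fin 2`. -/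
abbrev TP (N : ℕ) : Type := Matrix (Fin N → Fin 2) (Fin N → Fin 2) ℂ

/-- The Pauli matrices `σ₁, σ₂, σ₃`. -/
def pauli : Fin 3 → Matrix (Fin 2) (Fin 2) ℂ
  | 0 => !![0, 1; 1, 0]
  | 1 => !![0, -Complex.I; Complex.I, 0]
  | 2 => !![1, 0; 0, -1]

/-- The symmetrization operator `S_N` on `M₂(ℂ)^{⊗N}`: the average over all permutations
of the tensor factors. -/
def symmMat (N : ℕ) (A : TP N) : TP N :=
  (N.factorial : ℂ)⁻¹ • ∑ σ : Equiv.Perm (Fin N), Matrix.of fun i j => A (i ∘ σ) (j ∘ σ)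

/-- `b ⊗ I₂^{⊗(N−M)}` (junk value `0` if `M > N`). -/
def embedMat (M N : ℕ) (b : TP M) : TP N :=
  if h : M ≤ N then
    Matrix.of fun i j =>
      b (fun k => i (Fin.castLE h k)) (fun k => j (Fin.castLE h k)) *
        ∏ k ∈ Finset.univ.filter (fun k : Fin N => M ≤ (k : ℕ)),
          (if i k = j k then (1 : ℂ) else 0)
  else 0

/-- `S_{M,N}(b) = S_N(b ⊗ I₂^{⊗(N−M)})`. -/
def SMN (M N : ℕ) (b : TP M) : TP N := symmMat N (embedMat M N b)

/-- The elementary tensor `σ_{m 0} ⊗ ⋯ ⊗ σ_{m (L-1)}` as a matrix on `(ℂ²)^{⊗L}`. -/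
def pauliTensor {L : ℕ} (m : Fin L → Fin 3) : TP L :=
  Matrix.of fun i j => ∏ k, pauli (m k) (i k) (j k)

/-- For a monomial with exponents `d`, the list of its variable indices (first `d 0` copies
of `0`, then `d 1` copies of `1`, then `d 2` copies of `2`). -/
def monFun (d : Fin 3 →₀ ℕ) : Fin (d 0 + d 1 + d 2) → Fin 3 := fun k =>
  if (k : ℕ) < d 0 then 0 else if (k : ℕ) < d 0 + d 1 then 1 else 2

/-- Quantization of the monomial `x^{d 0} y^{d 1} z^{d 2}`:
`S_{L,N}(σ_{j₁} ⊗ ⋯ ⊗ σ_{j_L})` if `L ≤ N`, and `0` if `L > N`. -/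
def Qmon (N : ℕ) (d : Fin 3 →₀ ℕ) : TP N :=
  SMN (d 0 + d 1 + d 2) N (pauliTensor (monFun d))

/-- The quantization map `Q_{1/N}`: the linear extension of `Qmon` to all complex
polynomials in the three real variables `x, y, z`. -/
def Q (N : ℕ) (p : MvPolynomial (Fin 3) ℂ) : TP N :=
  ∑ d ∈ p.support, p.coeff d • Qmon N d

/-- The symmetric subspace `Sym^N(ℂ²) ⊆ (ℂ²)^{⊗N}` (the fixed points of the permutation
action, i.e. the range of the vector symmetrizer). -/
def SymSub (N : ℕ) : Submodule ℂ (EuclideanSpace ℂ (Fin N → Fin 2)) where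
  carrier := {v | ∀ σ : Equiv.Perm (Fin N), ∀ i, v (i ∘ σ) = v i}
  add_mem' := by
    intro a b ha hb σ i
    have : (a + b) (i ∘ σ) = a (i ∘ σ) + b (i ∘ σ) := rfl
    rw [this, ha σ i, hb σ i]; rfl
  zero_mem' := by intro σ i; rfl
  smul_mem' := by
    intro c v hv σ i
    have : (c • v) (i ∘ σ) = c • (v (i ∘ σ)) := rfl
    rw [this, hv σ i]; rfl

/-- The vector symmetrizer. -/
def symVec (N : ℕ) (v : EuclideanSpace ℂ (Fin N → Fin 2)) :
    EuclideanSpace ℂ (Fin N → Fin 2) :=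
  WithLp.toLp 2 fun i => (N.factorial : ℂ)⁻¹ * ∑ σ : Equiv.Perm (Fin N), v (i ∘ σ)

lemma symVec_mem (N : ℕ) (v : EuclideanSpace ℂ (Fin N → Fin 2)) :
    symVec N v ∈ SymSub N := by
  intro τ i
  show (N.factorial : ℂ)⁻¹ * ∑ σ : Equiv.Perm (Fin N), v ((i ∘ τ) ∘ σ)
      = (N.factorial : ℂ)⁻¹ * ∑ σ : Equiv.Perm (Fin N), v (i ∘ σ)
  congr 1
  exact Fintype.sum_equiv (Equiv.mulLeft τ) _ _ (fun σ => by rfl)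

/-- The vector symmetrizer as a linear map onto the symmetric subspace. -/
def symProj (N : ℕ) : EuclideanSpace ℂ (Fin N → Fin 2) →ₗ[ℂ] SymSub N where
  toFun v := ⟨symVec N v, symVec_mem N v⟩
  map_add' v w := by
    apply Subtype.ext
    apply PiLp.ext; intro i
    show (N.factorial : ℂ)⁻¹ * ∑ σ : Equiv.Perm (Fin N), (v + w) (i ∘ σ) = _
    have h : ∀ σ : Equiv.Perm (Fin N), (v + w) (i ∘ σ) = v (i ∘ σ) + w (i ∘ σ) :=
      fun _ => rfl
    simp only [h, Finset.sum_add_distrib]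
    show _ = (N.factorial : ℂ)⁻¹ * (∑ σ : Equiv.Perm (Fin N), v (i ∘ σ))
        + (N.factorial : ℂ)⁻¹ * (∑ σ : Equiv.Perm (Fin N), w (i ∘ σ))
    ring
  map_smul' c v := by
    apply Subtype.ext
    apply PiLp.ext; intro i
    show (N.factorial : ℂ)⁻¹ * ∑ σ : Equiv.Perm (Fin N), (c • v) (i ∘ σ) = _
    have h : ∀ σ : Equiv.Perm (Fin N), (c • v) (i ∘ σ) = c * v (i ∘ σ) := fun _ => rfl
    simp only [h, ← Finset.mul_sum]
    show _ = c * ((N.factorial : ℂ)⁻¹ * (∑ σ : Equiv.Perm (Fin N), v (i ∘ σ)))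
    ring

/-- The restriction (compression) of a matrix `A` on `(ℂ²)^{⊗N}` to the symmetric subspace
`Sym^N(ℂ²)`, as a continuous linear operator; when `A` leaves `Sym^N(ℂ²)` invariant (as do
all operators considered here) this is exactly the restriction `A|_{Sym^N(ℂ²)}`. -/
def restrSym (N : ℕ) (A : TP N) : SymSub N →L[ℂ] SymSub N :=
  LinearMap.toContinuousLinearMap
    ((symProj N) ∘ₗ (Matrix.toEuclideanLin A) ∘ₗ (SymSub N).subtype)

/-- The unit sphere `S² ⊂ ℝ³`. -/
abbrev S2 : Type := Metric.sphere (0 : EuclideanSpace ℝ (Fin 3)) 1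

/-- Spherical coordinates `(θ, φ) ↦ (sin θ cos φ, sin θ sin φ, cos θ)`. -/
def sphCoord (a : ℝ × ℝ) : EuclideanSpace ℝ (Fin 3) :=
  WithLp.toLp 2 ![Real.sin a.1 * Real.cos a.2, Real.sin a.1 * Real.sin a.2, Real.cos a.1]

lemma sphCoord_mem (a : ℝ × ℝ) :
    sphCoord a ∈ Metric.sphere (0 : EuclideanSpace ℝ (Fin 3)) 1 := by
  have h : ‖sphCoord a‖ = 1 := by
    rw [EuclideanSpace.norm_eq]
    have : ∑ i : Fin 3, sphCoord a i ^ 2 = 1 := by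
      have hs := Real.sin_sq_add_cos_sq a.1
      have hc := Real.sin_sq_add_cos_sq a.2
      simp [sphCoord, Fin.sum_univ_three]
      nlinarith [hs, hc]
    have h2 : ∀ i : Fin 3, ‖sphCoord a i‖ ^ 2 = sphCoord a i ^ 2 := fun i => sq_abs _
    simp only [h2, this]
    exact Real.sqrt_one
  simpa [mem_sphere_iff_norm] using h

/-- The standard surface measure `dΩ` on `S²` (of total mass `4π`), realized as the
push-forward of `sin θ dθ dφ` on `[0,π] × (−π,π]` under spherical coordinates. -/
def μS2 : Measure S2 :=
  Measure.map (fun a : ℝ × ℝ => (⟨sphCoord a, sphCoord_mem a⟩ : S2))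
    (((volume : Measure (ℝ × ℝ)).restrict
        (Set.Icc (0 : ℝ) Real.pi ×ˢ Set.Ioc (-Real.pi) Real.pi)).withDensity
      fun a => ENNReal.ofReal (Real.sin a.1))

/-- The polar angle `θ ∈ [0, π]` of a point of `S²`. -/
def thetaOf (Ω : S2) : ℝ := Real.arccos ((Ω : EuclideanSpace ℝ (Fin 3)) 2)

/-- The azimuthal angle `φ ∈ (−π, π]` of a point of `S²`. -/
def phiOf (Ω : S2) : ℝ :=
  Complex.arg (((Ω : EuclideanSpace ℝ (Fin 3)) 0 : ℂ) +
    ((Ω : EuclideanSpace ℝ (Fin 3)) 1 : ℂ) * Complex.I)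

/-- The coherent spin state `|Ω⟩₁ = cos(θ/2) e₁ + e^{iφ} sin(θ/2) e₂ ∈ ℂ²`. -/
def cs1 (Ω : S2) : Fin 2 → ℂ :=
  ![(Real.cos (thetaOf Ω / 2) : ℂ),
    Complex.exp (Complex.I * (phiOf Ω : ℂ)) * (Real.sin (thetaOf Ω / 2) : ℂ)]

/-- The `N`-fold coherent spin state `|Ω⟩_N = |Ω⟩₁^{⊗N} ∈ (ℂ²)^{⊗N}`. -/
def csN (N : ℕ) (Ω : S2) : EuclideanSpace ℂ (Fin N → Fin 2) :=
  WithLp.toLp 2 fun i => ∏ k, cs1 Ω (i k)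

/-- The matrix of the weak integral `((N+1)/(4π)) ∫_{S²} f(Ω) |Ω⟩⟨Ω|_N dΩ` on `(ℂ²)^{⊗N}`
(entrywise Bochner integral, which in finite dimension coincides with the weak integral). -/
def Q'mat (N : ℕ) (f : S2 → ℂ) : TP N :=
  Matrix.of fun i j =>
    ((N + 1 : ℂ) / (4 * (Real.pi : ℂ))) * ∫ Ω, f Ω * csN N Ω i * conj (csN N Ω j) ∂μS2

/-- The coherent-state (Berezin) quantization map `Q'_{1/N}`, as an operator on
`Sym^N(ℂ²)` (the range of `|Ω⟩⟨Ω|_N` lies in `Sym^N(ℂ²)`, so the compression coincides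
with the operator defined by the weak integral). -/
def Q' (N : ℕ) (f : S2 → ℂ) : SymSub N →L[ℂ] SymSub N := restrSym N (Q'mat N f)

/-- The restriction of a polynomial (in three real variables) to the unit sphere `S²`. -/
def restrictS2 (p : MvPolynomial (Fin 3) ℂ) : S2 → ℂ :=
  fun Ω => MvPolynomial.eval (fun i => ((Ω : EuclideanSpace ℝ (Fin 3)) i : ℂ)) p

/-- The restriction to `S²` as a linear map. -/
def restrictS2Lin : MvPolynomial (Fin 3) ℂ →ₗ[ℂ] (S2 → ℂ) where
  toFun := restrictS2
  map_add' p q := by funext Ω; simp [restrictS2]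
  map_smul' c p := by funext Ω; simp [restrictS2]

/-- `P_N(S²)`: the space of restrictions to `S²` of complex polynomials of degree `≤ N`
in three real variables. -/
def PNS2 (N : ℕ) : Submodule ℂ (S2 → ℂ) where
  carrier := {g | ∃ p : MvPolynomial (Fin 3) ℂ, p.totalDegree ≤ N ∧ g = restrictS2 p}
  add_mem' := by
    rintro a b ⟨p, hp, rfl⟩ ⟨q, hq, rfl⟩
    exact ⟨p + q, le_trans (MvPolynomial.totalDegree_add p q) (by omega),
      by funext Ω; simp [restrictS2]⟩
  zero_mem' := ⟨0, by simp, by funext Ω; simp [restrictS2]⟩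
  smul_mem' := by
    rintro c a ⟨p, hp, rfl⟩
    exact ⟨c • p, le_trans (MvPolynomial.totalDegree_smul_le c p) hp,
      by funext Ω; simp [restrictS2]⟩

/-- The `N`-fold tensor power `U^{⊗N}` of a `2×2` matrix, on `(ℂ²)^{⊗N}`. -/
def tpow (N : ℕ) (U : Matrix (Fin 2) (Fin 2) ℂ) : TP N :=
  Matrix.of fun i j => ∏ k, U (i k) (j k)

/-- `σ_k(j) = I₂ ⊗ ⋯ ⊗ σ_k ⊗ ⋯ ⊗ I₂` with the Pauli matrix `σ_k` in the `j`-th slot. -/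
def pauliAt (N : ℕ) (k : Fin 3) (j : Fin N) : TP N :=
  Matrix.of fun a b =>
    pauli k (a j) (b j) *
      ∏ t ∈ Finset.univ.filter (fun t : Fin N => t ≠ j), (if a t = b t then (1 : ℂ) else 0)

/-- The quantum Curie–Weiss Hamiltonian
`h^{CW}_{1/N} = (1/N)( −(J/(2N)) Σ_{i,j} σ₃(i)σ₃(j) − B Σ_j σ₁(j))`. -/
def hCW (J B : ℝ) (N : ℕ) : TP N :=
  ((N : ℂ))⁻¹ • ((-(J / (2 * N)) : ℂ) • ∑ i : Fin N, ∑ j : Fin N,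
      pauliAt N 2 i * pauliAt N 2 j
    + (-(B : ℂ)) • ∑ j : Fin N, pauliAt N 0 j)

open scoped Classical in
/-- The action of a (special orthogonal) matrix on the unit sphere `S²`
(junk value if the image does not lie on the sphere). -/
def rotAct (R : Matrix (Fin 3) (Fin 3) ℝ) (Ω : S2) : S2 :=
  if h : (WithLp.toLp 2 (R.mulVec (Ω : EuclideanSpace ℝ (Fin 3))) : EuclideanSpace ℝ (Fin 3)) ∈
      Metric.sphere (0 : EuclideanSpace ℝ (Fin 3)) 1
  then ⟨WithLp.toLp 2 (R.mulVec (Ω : EuclideanSpace ℝ (Fin 3))), h⟩ else Ω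

/-- A polynomial in three variables is harmonic if its Laplacian vanishes. -/
def IsHarmonic (p : MvPolynomial (Fin 3) ℂ) : Prop :=
  ∑ i : Fin 3, MvPolynomial.pderiv i (MvPolynomial.pderiv i p) = 0

/-- The polynomial `x² + y² + z² − 1`. -/
def sphPoly : MvPolynomial (Fin 3) ℂ :=
  MvPolynomial.X 0 ^ 2 + MvPolynomial.X 1 ^ 2 + MvPolynomial.X 2 ^ 2 - 1

/-- The Dicke state `|k, N−k⟩ ∈ Sym^N(ℂ²)`: `binom(N,k)^{-1/2}` times the sum of all
elementary tensors with exactly `k` factors `e₂` (and `N−k` factors `e₁`). -/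
def dicke (N k : ℕ) : EuclideanSpace ℂ (Fin N → Fin 2) :=
  WithLp.toLp 2 fun i => if (Finset.univ.filter fun t => i t = 1).card = k
    then ((Real.sqrt (N.choose k) : ℂ))⁻¹ else 0

/-- The operator norm of a matrix acting on `(ℂ²)^{⊗N}` with its Euclidean (ℓ²) norm. -/
def matOpNorm {N : ℕ} (A : TP N) : ℝ :=
  ‖LinearMap.toContinuousLinearMap (Matrix.toEuclideanLin A)‖


/-! ### Auxiliary development for Statement 4 -/

section Aux

variable {N : ℕ}

/-- Kronecker-type product of `N` two-by-two matrices. -/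
def kron (N : ℕ) (f : Fin N → Matrix (Fin 2) (Fin 2) ℂ) : TP N :=
  Matrix.of fun i j => ∏ k, f k (i k) (j k)

lemma symVec_of_mem {v : EuclideanSpace ℂ (Fin N → Fin 2)} (hv : v ∈ SymSub N) :
    symVec N v = v := by
  apply PiLp.ext; intro i
  show (N.factorial : ℂ)⁻¹ * ∑ σ : Equiv.Perm (Fin N), v (i ∘ σ) = v i
  have h1 : ∀ σ : Equiv.Perm (Fin N), v (i ∘ σ) = v i := fun σ => hv σ i
  rw [Finset.sum_congr rfl (fun σ _ => h1 σ), Finset.sum_const, Finset.card_univ,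
    Fintype.card_perm, Fintype.card_fin, nsmul_eq_mul, ← mul_assoc,
    inv_mul_cancel₀ (by exact_mod_cast N.factorial_ne_zero), one_mul]

lemma symVec_symVec (v : EuclideanSpace ℂ (Fin N → Fin 2)) :
    symVec N (symVec N v) = symVec N v := symVec_of_mem (symVec_mem N v)

lemma sum_precomp (σ : Equiv.Perm (Fin N)) (g : (Fin N → Fin 2) → ℂ) :
    ∑ m : Fin N → Fin 2, g (m ∘ σ) = ∑ m : Fin N → Fin 2, g m :=
  Fintype.sum_equiv ⟨fun m => m ∘ σ, fun m => m ∘ σ.symm,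
    fun m => by funext k; simp, fun m => by funext k; simp⟩ _ _ (fun m => rfl)

/-- Reindexing a sum against a symmetric vector. -/
lemma sum_mul_symm (σ : Equiv.Perm (Fin N)) {v : EuclideanSpace ℂ (Fin N → Fin 2)}
    (hv : v ∈ SymSub N) (F : (Fin N → Fin 2) → ℂ) :
    ∑ m : Fin N → Fin 2, F (m ∘ σ) * v m = ∑ m : Fin N → Fin 2, F m * v m :=
  Fintype.sum_equiv ⟨fun m => m ∘ σ, fun m => m ∘ σ.symm,
    fun m => by funext k; simp, fun m => by funext k; simp⟩ _ _
    (fun m => by show F (m ∘ ⇑σ) * v m = F (m ∘ ⇑σ) * v (m ∘ ⇑σ); rw [hv σ m])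

lemma symVec_precomp (τ : Equiv.Perm (Fin N)) (w : EuclideanSpace ℂ (Fin N → Fin 2)) :
    symVec N (WithLp.toLp 2 (fun i => w (i ∘ τ))) = symVec N w := by
  apply PiLp.ext; intro i
  show (N.factorial : ℂ)⁻¹ * ∑ σ : Equiv.Perm (Fin N), w ((i ∘ σ) ∘ τ)
      = (N.factorial : ℂ)⁻¹ * ∑ σ : Equiv.Perm (Fin N), w (i ∘ σ)
  congr 1
  exact Fintype.sum_equiv (Equiv.mulRight τ) _ _ (fun σ => rfl)

/-- Criterion for equality of compressions to the symmetric subspace. -/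
lemma restrSym_eq_of {A B : TP N}
    (h : ∀ v : EuclideanSpace ℂ (Fin N → Fin 2), v ∈ SymSub N →
      symVec N (WithLp.toLp 2 (A.mulVec v)) = symVec N (WithLp.toLp 2 (B.mulVec v))) :
    restrSym N A = restrSym N B := by
  unfold restrSym
  congr 1
  apply LinearMap.ext
  rintro ⟨v, hv⟩
  apply Subtype.ext
  exact h v hv

/-- `restrSym` as a linear map. -/
def restrSymL (N : ℕ) : TP N →ₗ[ℂ] (SymSub N →L[ℂ] SymSub N) where
  toFun A := restrSym N A
  map_add' A B := by
    unfold restrSym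
    rw [LinearEquiv.map_add Matrix.toEuclideanLin, LinearMap.add_comp, LinearMap.comp_add,
      LinearEquiv.map_add LinearMap.toContinuousLinearMap]
  map_smul' c A := by
    unfold restrSym
    rw [LinearEquiv.map_smul Matrix.toEuclideanLin, LinearMap.smul_comp, LinearMap.comp_smul,
      LinearEquiv.map_smul LinearMap.toContinuousLinearMap]
    rfl

lemma restrSymL_apply (A : TP N) : restrSymL N A = restrSym N A := rfl

/-- Compression kills the matrix symmetrization. -/
lemma restrSym_symmMat (X : TP N) : restrSym N (symmMat N X) = restrSym N X := by
  apply restrSym_eq_of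
  intro v hv
  have key : WithLp.toLp 2 ((symmMat N X).mulVec v) = symVec N (WithLp.toLp 2 (X.mulVec v)) := by
    apply PiLp.ext; intro i
    show ∑ j, symmMat N X i j * v j = (N.factorial : ℂ)⁻¹ * ∑ σ : Equiv.Perm (Fin N), (X.mulVec v) (i ∘ σ)
    have e1 : ∀ j, symmMat N X i j
        = (N.factorial : ℂ)⁻¹ * ∑ σ : Equiv.Perm (Fin N), X (i ∘ σ) (j ∘ σ) := by
      intro j
      simp [symmMat, Matrix.smul_apply, Matrix.sum_apply, smul_eq_mul]
    calc ∑ j, symmMat N X i j * v j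
        = (N.factorial : ℂ)⁻¹ * ∑ j, ∑ σ : Equiv.Perm (Fin N), X (i ∘ σ) (j ∘ σ) * v j := by
          rw [Finset.mul_sum]
          refine Finset.sum_congr rfl fun j _ => ?_
          rw [e1 j, mul_assoc, Finset.sum_mul]
      _ = (N.factorial : ℂ)⁻¹ * ∑ σ : Equiv.Perm (Fin N), ∑ j, X (i ∘ σ) (j ∘ σ) * v j := by
          rw [Finset.sum_comm]
      _ = (N.factorial : ℂ)⁻¹ * ∑ σ : Equiv.Perm (Fin N), (X.mulVec v) (i ∘ σ) := by
          congr 1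
          refine Finset.sum_congr rfl fun σ _ => ?_
          exact sum_mul_symm σ hv (fun j => X (i ∘ σ) j)
  rw [key, symVec_symVec]

/-- Compression is invariant under permuting the tensor factors of a Kronecker product. -/
lemma restrSym_kron_comp (f : Fin N → Matrix (Fin 2) (Fin 2) ℂ) (σ : Equiv.Perm (Fin N)) :
    restrSym N (kron N (f ∘ ⇑σ)) = restrSym N (kron N f) := by
  apply restrSym_eq_of
  intro v hv
  have key : (kron N (f ∘ ⇑σ)).mulVec v = fun i => (kron N f).mulVec v (i ∘ ⇑σ⁻¹) := by
    funext i
    show ∑ m, kron N (f ∘ ⇑σ) i m * v m = ∑ m, kron N f (i ∘ ⇑σ⁻¹) m * v m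
    have hk : ∀ m, kron N (f ∘ ⇑σ) i m = kron N f (i ∘ ⇑σ⁻¹) (m ∘ ⇑σ⁻¹) := by
      intro m
      show ∏ k, f (σ k) (i k) (m k) = ∏ k, f k (i (σ⁻¹ k)) (m (σ⁻¹ k))
      refine Fintype.prod_equiv σ _ _ fun k => ?_
      simp
    rw [Finset.sum_congr rfl (fun m _ => by rw [hk m])]
    exact sum_mul_symm σ⁻¹ hv (fun m => kron N f (i ∘ ⇑σ⁻¹) m)
  rw [key]; exact symVec_precomp σ⁻¹ (WithLp.toLp 2 ((kron N f).mulVec v))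

lemma pauli_sum_id (a b c d : Fin 2) :
    ∑ j : Fin 3, pauli j a b * pauli j c d =
      2 * ((if a = d then (1:ℂ) else 0) * (if c = b then (1:ℂ) else 0))
      - (if a = b then (1:ℂ) else 0) * (if c = d then (1:ℂ) else 0) := by
  fin_cases a <;> fin_cases b <;> fin_cases c <;> fin_cases d <;>
    simp [pauli, Fin.sum_univ_three, Complex.I_mul_I] <;> ring_nf <;>
    simp [Complex.I_sq] <;> ring

/-- The swap cancellation: summing over a Pauli pair at two slots reproduces the identity. -/
lemma swap_cancel (p p' : Fin N) (hne : p ≠ p') (f : Fin N → Matrix (Fin 2) (Fin 2) ℂ)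
    (hp : f p = 1) (hp' : f p' = 1) :
    ∑ j : Fin 3, restrSym N
        (kron N (Function.update (Function.update f p (pauli j)) p' (pauli j)))
      = restrSym N (kron N f) := by
  classical
  set F : Fin 3 → Fin N → Matrix (Fin 2) (Fin 2) ℂ :=
    fun j => Function.update (Function.update f p (pauli j)) p' (pauli j) with hF
  have hmemp' : p' ∈ Finset.univ.erase p :=
    Finset.mem_erase.mpr ⟨Ne.symm hne, Finset.mem_univ _⟩
  set S : Finset (Fin N) := (Finset.univ.erase p).erase p' with hS
  have hsplit : ∀ g : Fin N → ℂ, ∏ k, g k = g p * (g p' * ∏ k ∈ S, g k) := by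
    intro g
    rw [← Finset.mul_prod_erase Finset.univ g (Finset.mem_univ p),
      ← Finset.mul_prod_erase _ g hmemp']
  have hFp : ∀ j, F j p = pauli j := by
    intro j
    simp only [hF]
    rw [Function.update_of_ne hne, Function.update_self]
  have hFp' : ∀ j, F j p' = pauli j := by
    intro j
    simp only [hF]
    rw [Function.update_self]
  have hFS : ∀ (j : Fin 3) (k : Fin N), k ∈ S → F j k = f k := by
    intro j k hk
    rw [hS, Finset.mem_erase, Finset.mem_erase] at hk
    simp only [hF]
    rw [Function.update_of_ne hk.1, Function.update_of_ne hk.2.1]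
  set P : (Fin N → Fin 2) → (Fin N → Fin 2) → ℂ :=
    fun i m => ∏ k ∈ S, f k (i k) (m k) with hP
  have hkF : ∀ (j : Fin 3) (i m : Fin N → Fin 2),
      kron N (F j) i m = (pauli j (i p) (m p) * pauli j (i p') (m p')) * P i m := by
    intro j i m
    show ∏ k, F j k (i k) (m k) = _
    rw [hsplit (fun k => F j k (i k) (m k))]
    have hprod : ∏ k ∈ S, F j k (i k) (m k) = ∏ k ∈ S, f k (i k) (m k) :=
      Finset.prod_congr rfl fun k hk => by rw [hFS j k hk]
    rw [hprod, hFp j, hFp' j, hP]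
    ring
  have hkf : ∀ i m : Fin N → Fin 2,
      kron N f i m = ((if i p = m p then (1:ℂ) else 0)
        * (if i p' = m p' then (1:ℂ) else 0)) * P i m := by
    intro i m
    show ∏ k, f k (i k) (m k) = _
    rw [hsplit (fun k => f k (i k) (m k))]
    rw [hp, hp', Matrix.one_apply, Matrix.one_apply, hP]
    ring
  have hstep : ∑ j : Fin 3, restrSym N (kron N (F j))
      = restrSym N (∑ j : Fin 3, kron N (F j)) :=
    (map_sum (restrSymL N) (fun j => kron N (F j)) Finset.univ).symm
  rw [hstep]
  apply restrSym_eq_of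
  intro v hv
  suffices hMV : (∑ j : Fin 3, kron N (F j)).mulVec v = (kron N f).mulVec v by rw [hMV]
  funext i
  show ∑ m, (∑ j : Fin 3, kron N (F j)) i m * v m = ∑ m, kron N f i m * v m
  have hswap : ∀ m : Fin N → Fin 2,
      (((if i p = (m ∘ ⇑(Equiv.swap p p')) p then (1:ℂ) else 0) *
        (if i p' = (m ∘ ⇑(Equiv.swap p p')) p' then (1:ℂ) else 0))
          * P i (m ∘ ⇑(Equiv.swap p p')))
      = ((if i p = m p' then (1:ℂ) else 0) * (if i p' = m p then (1:ℂ) else 0)) * P i m := by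
    intro m
    have h1 : (m ∘ ⇑(Equiv.swap p p')) p = m p' := by simp
    have h2 : (m ∘ ⇑(Equiv.swap p p')) p' = m p := by simp
    rw [h1, h2]
    congr 1
    refine Finset.prod_congr rfl fun k hk => ?_
    rw [hS, Finset.mem_erase, Finset.mem_erase] at hk
    show f k (i k) (m (Equiv.swap p p' k)) = f k (i k) (m k)
    rw [Equiv.swap_apply_of_ne_of_ne hk.2.1 hk.1]
  have hAB : ∑ m : Fin N → Fin 2,
        (((if i p = m p' then (1:ℂ) else 0) * (if i p' = m p then (1:ℂ) else 0)) * P i m) * v m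
      = ∑ m : Fin N → Fin 2,
        (((if i p = m p then (1:ℂ) else 0) * (if i p' = m p' then (1:ℂ) else 0)) * P i m) * v m := by
    have hs := sum_mul_symm (Equiv.swap p p') hv
      (fun m => ((if i p = m p then (1:ℂ) else 0) * (if i p' = m p' then (1:ℂ) else 0)) * P i m)
    rw [← hs]
    refine Finset.sum_congr rfl fun m _ => ?_
    rw [hswap m]
  calc ∑ m, (∑ j : Fin 3, kron N (F j)) i m * v m
      = ∑ m : Fin N → Fin 2, ((2 * ((if i p = m p' then (1:ℂ) else 0)
          * (if i p' = m p then (1:ℂ) else 0))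
          - (if i p = m p then (1:ℂ) else 0) * (if i p' = m p' then (1:ℂ) else 0)) * P i m)
            * v m := by
        refine Finset.sum_congr rfl fun m _ => ?_
        congr 1
        rw [Matrix.sum_apply, Finset.sum_congr rfl (fun j _ => hkF j i m),
          ← Finset.sum_mul, pauli_sum_id]
    _ = 2 * (∑ m : Fin N → Fin 2, (((if i p = m p' then (1:ℂ) else 0)
          * (if i p' = m p then (1:ℂ) else 0)) * P i m) * v m)
        - ∑ m : Fin N → Fin 2, (((if i p = m p then (1:ℂ) else 0)
          * (if i p' = m p' then (1:ℂ) else 0)) * P i m) * v m := by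
        rw [Finset.mul_sum, ← Finset.sum_sub_distrib]
        refine Finset.sum_congr rfl fun m _ => ?_
        ring
    _ = ∑ m : Fin N → Fin 2, (((if i p = m p then (1:ℂ) else 0)
          * (if i p' = m p' then (1:ℂ) else 0)) * P i m) * v m := by
        rw [hAB]; ring
    _ = ∑ m, kron N f i m * v m := by
        refine Finset.sum_congr rfl fun m _ => ?_
        rw [hkf i m]

def stdF (N a b c : ℕ) : Fin N → Matrix (Fin 2) (Fin 2) ℂ := fun k =>
  if (k : ℕ) < a then pauli 0 else if (k : ℕ) < a + b then pauli 1
  else if (k : ℕ) < a + b + c then pauli 2 else 1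

lemma embed_eq_kron (d : Fin 3 →₀ ℕ) (h : d 0 + d 1 + d 2 ≤ N) :
    embedMat (d 0 + d 1 + d 2) N (pauliTensor (monFun d)) =
      kron N (stdF N (d 0) (d 1) (d 2)) := by
  ext i j
  set L := d 0 + d 1 + d 2 with hL
  rw [embedMat, dif_pos h]
  show (pauliTensor (monFun d)) (fun k => i (Fin.castLE h k)) (fun k => j (Fin.castLE h k)) *
      (∏ k ∈ Finset.univ.filter (fun k : Fin N => L ≤ (k : ℕ)),
        (if i k = j k then (1 : ℂ) else 0))
    = ∏ k, stdF N (d 0) (d 1) (d 2) k (i k) (j k)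
  rw [← Finset.prod_filter_mul_prod_filter_not Finset.univ (fun k : Fin N => (k : ℕ) < L)]
  congr 1
  · -- pauli part
    show ∏ k : Fin L, pauli (monFun d k) (i (Fin.castLE h k)) (j (Fin.castLE h k)) = _
    refine Finset.prod_bij (fun (k : Fin L) _ => Fin.castLE h k) ?_ ?_ ?_ ?_
    · intro k _
      simp only [Finset.mem_filter, Finset.mem_univ, true_and, Fin.coe_castLE]
      exact k.isLt
    · intro k1 _ k2 _ hk
      exact Fin.ext (by simpa [Fin.ext_iff] using hk)
    · intro x hx
      rw [Finset.mem_filter] at hx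
      exact ⟨⟨(x : ℕ), hx.2⟩, Finset.mem_univ _, Fin.ext rfl⟩
    · intro k _
      show pauli (monFun d k) _ _ = stdF N (d 0) (d 1) (d 2) (Fin.castLE h k) _ _
      have hkL : (k : ℕ) < L := k.isLt
      unfold stdF monFun
      simp only [Fin.coe_castLE]
      split_ifs <;> first | rfl | omega
  · -- identity part
    have hset : Finset.univ.filter (fun k : Fin N => L ≤ (k : ℕ))
        = Finset.univ.filter (fun k : Fin N => ¬ (k : ℕ) < L) := by
      apply Finset.filter_congr
      intro k _
      simp [not_lt]
    rw [hset]
    refine Finset.prod_congr rfl fun k hk => ?_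
    rw [Finset.mem_filter] at hk
    show (if i k = j k then (1:ℂ) else 0) = stdF N (d 0) (d 1) (d 2) k (i k) (j k)
    have hstd : stdF N (d 0) (d 1) (d 2) k = 1 := by
      unfold stdF
      rw [if_neg (by omega), if_neg (by omega), if_neg (by omega)]
    rw [hstd, Matrix.one_apply]

lemma restrSym_Qmon (d : Fin 3 →₀ ℕ) (h : d 0 + d 1 + d 2 ≤ N) :
    restrSym N (Qmon N d) = restrSym N (kron N (stdF N (d 0) (d 1) (d 2))) := by
  rw [Qmon, SMN, restrSym_symmMat, embed_eq_kron d h]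

/-- The insertion permutation. -/
def insPerm (N t L : ℕ) (ht : t ≤ L) (hN : L + 2 ≤ N) : Equiv.Perm (Fin N) where
  toFun k := ⟨if (k : ℕ) < t then k else if (k : ℕ) = t then L
      else if (k : ℕ) = t + 1 then L + 1 else if (k : ℕ) < L + 2 then (k : ℕ) - 2 else k,
    by have := k.isLt; split_ifs <;> omega⟩
  invFun m := ⟨if (m : ℕ) < t then m else if (m : ℕ) < L then (m : ℕ) + 2
      else if (m : ℕ) = L then t else if (m : ℕ) = L + 1 then t + 1 else m,
    by have := m.isLt; split_ifs <;> omega⟩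
  left_inv k := by
    apply Fin.ext
    have hk := k.isLt
    simp only [Fin.val_mk]
    split_ifs <;> omega
  right_inv m := by
    apply Fin.ext
    have hm := m.isLt
    simp only [Fin.val_mk]
    split_ifs <;> omega

def updF (N a b c : ℕ) (j : Fin 3) (h : a + b + c + 2 ≤ N) : Fin N → Matrix (Fin 2) (Fin 2) ℂ :=
  Function.update (Function.update (stdF N a b c) ⟨a + b + c, by omega⟩ (pauli j))
    ⟨a + b + c + 1, by omega⟩ (pauli j)

set_option maxHeartbeats 2000000 in
lemma updF_comp (a b c : ℕ) (j : Fin 3) (t : ℕ) (ht : t ≤ a + b + c)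
    (h : a + b + c + 2 ≤ N) :
    updF N a b c j h ∘ ⇑(insPerm N t (a + b + c) ht h) = fun k : Fin N =>
      if (k : ℕ) < t then stdF N a b c k
      else if (k : ℕ) < t + 2 then pauli j
      else if (k : ℕ) < a + b + c + 2 then stdF N a b c ⟨(k : ℕ) - 2, by have := k.isLt; omega⟩
      else 1 := by
  funext k
  have hk := k.isLt
  show updF N a b c j h (insPerm N t (a + b + c) ht h k) = _
  rw [updF, insPerm]
  simp only [Equiv.coe_fn_mk, Function.update_apply, Fin.ext_iff, Fin.val_mk]
  unfold stdF
  simp only [Fin.val_mk]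
  split_ifs <;> first | rfl | omega

lemma stdF_ins₀ (a b c : ℕ) (h : a + b + c + 2 ≤ N) :
    stdF N (a + 2) b c = updF N a b c 0 h ∘ ⇑(insPerm N a (a + b + c) (by omega) h) := by
  rw [updF_comp a b c 0 a (by omega) h]
  funext k
  unfold stdF
  simp only [Fin.val_mk]
  split_ifs <;> first | rfl | omega
lemma stdF_ins₁ (a b c : ℕ) (h : a + b + c + 2 ≤ N) :
    stdF N a (b + 2) c = updF N a b c 1 h ∘ ⇑(insPerm N (a + b) (a + b + c) (by omega) h) := by
  rw [updF_comp a b c 1 (a + b) (by omega) h]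
  funext k
  unfold stdF
  simp only [Fin.val_mk]
  split_ifs <;> first | rfl | omega
lemma stdF_ins₂ (a b c : ℕ) (h : a + b + c + 2 ≤ N) :
    stdF N a b (c + 2) = updF N a b c 2 h ∘ ⇑(insPerm N (a + b + c) (a + b + c) (by omega) h) := by
  rw [updF_comp a b c 2 (a + b + c) (by omega) h]
  funext k
  unfold stdF
  simp only [Fin.val_mk]
  split_ifs <;> first | rfl | omega

lemma key_mono (d : Fin 3 →₀ ℕ) (h : d 0 + d 1 + d 2 + 2 ≤ N) :
    ∑ j : Fin 3, restrSym N (Qmon N (d + Finsupp.single j 2)) = restrSym N (Qmon N d) := by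
  have hL : d 0 + d 1 + d 2 ≤ N := by omega
  have h0 : restrSym N (Qmon N (d + Finsupp.single 0 2))
      = restrSym N (kron N (updF N (d 0) (d 1) (d 2) 0 h)) := by
    have e0 : ((d + Finsupp.single (0 : Fin 3) 2) : Fin 3 →₀ ℕ) (0 : Fin 3) = d 0 + 2 := by simp
    have e1 : ((d + Finsupp.single (0 : Fin 3) 2) : Fin 3 →₀ ℕ) (1 : Fin 3) = d 1 := by
      simp [Finsupp.single_apply]
    have e2 : ((d + Finsupp.single (0 : Fin 3) 2) : Fin 3 →₀ ℕ) (2 : Fin 3) = d 2 := by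
      simp [Finsupp.single_apply]
    rw [restrSym_Qmon (d + Finsupp.single 0 2) (by rw [e0, e1, e2]; omega), e0, e1, e2,
      stdF_ins₀ (d 0) (d 1) (d 2) h, restrSym_kron_comp]
  have h1 : restrSym N (Qmon N (d + Finsupp.single 1 2))
      = restrSym N (kron N (updF N (d 0) (d 1) (d 2) 1 h)) := by
    have e0 : ((d + Finsupp.single (1 : Fin 3) 2) : Fin 3 →₀ ℕ) (0 : Fin 3) = d 0 := by
      simp [Finsupp.single_apply]
    have e1 : ((d + Finsupp.single (1 : Fin 3) 2) : Fin 3 →₀ ℕ) (1 : Fin 3) = d 1 + 2 := by simp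
    have e2 : ((d + Finsupp.single (1 : Fin 3) 2) : Fin 3 →₀ ℕ) (2 : Fin 3) = d 2 := by
      simp [Finsupp.single_apply]
    rw [restrSym_Qmon (d + Finsupp.single 1 2) (by rw [e0, e1, e2]; omega), e0, e1, e2,
      stdF_ins₁ (d 0) (d 1) (d 2) h, restrSym_kron_comp]
  have h2 : restrSym N (Qmon N (d + Finsupp.single 2 2))
      = restrSym N (kron N (updF N (d 0) (d 1) (d 2) 2 h)) := by
    have e0 : ((d + Finsupp.single (2 : Fin 3) 2) : Fin 3 →₀ ℕ) (0 : Fin 3) = d 0 := by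
      simp [Finsupp.single_apply]
    have e1 : ((d + Finsupp.single (2 : Fin 3) 2) : Fin 3 →₀ ℕ) (1 : Fin 3) = d 1 := by
      simp [Finsupp.single_apply]
    have e2 : ((d + Finsupp.single (2 : Fin 3) 2) : Fin 3 →₀ ℕ) (2 : Fin 3) = d 2 + 2 := by simp
    rw [restrSym_Qmon (d + Finsupp.single 2 2) (by rw [e0, e1, e2]; omega), e0, e1, e2,
      stdF_ins₂ (d 0) (d 1) (d 2) h, restrSym_kron_comp]
  rw [Fin.sum_univ_three, h0, h1, h2, restrSym_Qmon d hL]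
  have hp : stdF N (d 0) (d 1) (d 2) ⟨d 0 + d 1 + d 2, by omega⟩ = 1 := by
    unfold stdF
    simp only [Fin.val_mk]
    rw [if_neg (by omega), if_neg (by omega), if_neg (by omega)]
  have hp' : stdF N (d 0) (d 1) (d 2) ⟨d 0 + d 1 + d 2 + 1, by omega⟩ = 1 := by
    unfold stdF
    simp only [Fin.val_mk]
    rw [if_neg (by omega), if_neg (by omega), if_neg (by omega)]
  have hsw := swap_cancel (⟨d 0 + d 1 + d 2, by omega⟩ : Fin N)
    ⟨d 0 + d 1 + d 2 + 1, by omega⟩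
    (by intro hq; rw [Fin.mk.injEq] at hq; omega)
    (stdF N (d 0) (d 1) (d 2)) hp hp'
  rw [Fin.sum_univ_three] at hsw
  exact hsw

lemma Q_eq_sum_subset (p : MvPolynomial (Fin 3) ℂ) (s : Finset (Fin 3 →₀ ℕ))
    (hs : p.support ⊆ s) : Q N p = ∑ d ∈ s, p.coeff d • Qmon N d := by
  rw [Q]
  exact Finset.sum_subset hs fun d _ hd => by
    rw [MvPolynomial.notMem_support_iff.mp hd, zero_smul]

lemma Q_add (p r : MvPolynomial (Fin 3) ℂ) : Q N (p + r) = Q N p + Q N r := by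
  classical
  have hsub : (p + r).support ⊆ p.support ∪ r.support := MvPolynomial.support_add
  rw [Q_eq_sum_subset (p + r) (p.support ∪ r.support) hsub,
    Q_eq_sum_subset p (p.support ∪ r.support) Finset.subset_union_left,
    Q_eq_sum_subset r (p.support ∪ r.support) Finset.subset_union_right,
    ← Finset.sum_add_distrib]
  refine Finset.sum_congr rfl fun d _ => ?_
  rw [MvPolynomial.coeff_add, add_smul]

/-- `Q N` as an additive monoid hom. -/
def Qhom (N : ℕ) : MvPolynomial (Fin 3) ℂ →+ TP N := AddMonoidHom.mk' (Q N) Q_add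

lemma Q_sub (p r : MvPolynomial (Fin 3) ℂ) : Q N (p - r) = Q N p - Q N r :=
  map_sub (Qhom N) p r

lemma Q_monomial (e : Fin 3 →₀ ℕ) (c : ℂ) :
    Q N (MvPolynomial.monomial e c) = c • Qmon N e := by
  by_cases hc : c = 0
  · simp [hc, Q]
  · rw [Q, MvPolynomial.support_monomial, if_neg hc, Finset.sum_singleton,
      MvPolynomial.coeff_monomial, if_pos rfl]

end Aux

set_option synthInstance.maxHeartbeats 1000000 in
set_option maxHeartbeats 1000000 in
/-- Proposition 2.7 of the paper: for every complex polynomial `q` in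
three real variables, `‖ Q_{1/N}(q · (x²+y²+z²−1))|_{Sym^N(ℂ²)} ‖_N → 0` as `N → ∞`. -/
theorem norm_restrSym_Q_mul_sphPoly_tendsto_zero (q : MvPolynomial (Fin 3) ℂ) :
    Tendsto (fun N : ℕ => ‖restrSym N (Q N (q * sphPoly))‖) atTop (𝓝 0) := by
  have hev : ∀ᶠ N : ℕ in atTop, (0 : ℝ) = ‖restrSym N (Q N (q * sphPoly))‖ := by
    filter_upwards [eventually_ge_atTop (q.totalDegree + 2)] with N hN
    have hq : q * sphPoly = ∑ d ∈ q.support,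
        ((MvPolynomial.monomial (d + Finsupp.single 0 2)) (q.coeff d)
         + (MvPolynomial.monomial (d + Finsupp.single 1 2)) (q.coeff d)
         + (MvPolynomial.monomial (d + Finsupp.single 2 2)) (q.coeff d)
         - (MvPolynomial.monomial d) (q.coeff d)) := by
      conv_lhs => rw [q.as_sum, Finset.sum_mul]
      refine Finset.sum_congr rfl fun d _ => ?_
      rw [sphPoly, mul_sub, mul_add, mul_add, mul_one,
        MvPolynomial.X_pow_eq_monomial, MvPolynomial.X_pow_eq_monomial,
        MvPolynomial.X_pow_eq_monomial,
        MvPolynomial.monomial_mul, MvPolynomial.monomial_mul, MvPolynomial.monomial_mul]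
      simp only [mul_one]
    have hzero : restrSym N (Q N (q * sphPoly)) = 0 := by
      rw [hq]
      have e1 : Q N (∑ d ∈ q.support,
          ((MvPolynomial.monomial (d + Finsupp.single 0 2)) (q.coeff d)
           + (MvPolynomial.monomial (d + Finsupp.single 1 2)) (q.coeff d)
           + (MvPolynomial.monomial (d + Finsupp.single 2 2)) (q.coeff d)
           - (MvPolynomial.monomial d) (q.coeff d)))
          = ∑ d ∈ q.support, Q N
          ((MvPolynomial.monomial (d + Finsupp.single 0 2)) (q.coeff d)
           + (MvPolynomial.monomial (d + Finsupp.single 1 2)) (q.coeff d)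
           + (MvPolynomial.monomial (d + Finsupp.single 2 2)) (q.coeff d)
           - (MvPolynomial.monomial d) (q.coeff d)) := map_sum (Qhom N) _ _
      have e2 : restrSym N (∑ d ∈ q.support, Q N
          ((MvPolynomial.monomial (d + Finsupp.single 0 2)) (q.coeff d)
           + (MvPolynomial.monomial (d + Finsupp.single 1 2)) (q.coeff d)
           + (MvPolynomial.monomial (d + Finsupp.single 2 2)) (q.coeff d)
           - (MvPolynomial.monomial d) (q.coeff d)))
          = ∑ d ∈ q.support, restrSymL N (Q N
          ((MvPolynomial.monomial (d + Finsupp.single 0 2)) (q.coeff d)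
           + (MvPolynomial.monomial (d + Finsupp.single 1 2)) (q.coeff d)
           + (MvPolynomial.monomial (d + Finsupp.single 2 2)) (q.coeff d)
           - (MvPolynomial.monomial d) (q.coeff d))) := map_sum (restrSymL N) _ _
      rw [e1, e2]
      refine Finset.sum_eq_zero fun d hd => ?_
      have hdeg : d 0 + d 1 + d 2 + 2 ≤ N := by
        have hd1 : (d.sum fun _ e => e) ≤ q.totalDegree := MvPolynomial.le_totalDegree hd
        have hd2 : (d.sum fun _ e => e) = d 0 + d 1 + d 2 := by
          rw [Finsupp.sum_fintype _ _ (fun _ => rfl), Fin.sum_univ_three]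
        omega
      have hk := key_mono d hdeg
      rw [Fin.sum_univ_three] at hk
      rw [Q_sub, Q_add, Q_add, Q_monomial, Q_monomial, Q_monomial, Q_monomial,
        map_sub (restrSymL N), map_add (restrSymL N), map_add (restrSymL N),
        _root_.map_smul (restrSymL N), _root_.map_smul (restrSymL N),
        _root_.map_smul (restrSymL N), _root_.map_smul (restrSymL N),
        restrSymL_apply, restrSymL_apply, restrSymL_apply, restrSymL_apply,
        ← smul_add, ← smul_add, hk, sub_self]
    rw [hzero]
    exact (norm_zero (E := SymSub N →L[ℂ] SymSub N)).symm
  exact Tendsto.congr' hev tendsto_const_nhds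

end
end

section
/- Let N ≥ 2 and 0 ≤ k ≤ N. Then the Dicke vector |k, N−k⟩ is an eigenvector of S_{2,N}(σ₃⊗σ₃): S_{2,N}(σ₃⊗σ₃)|k, N−k⟩ = (((N−2k)² − N)/(N(N−1))) · |k, N−k⟩. -/
open scoped ComplexConjugate
open MeasureTheory Filter Topology

noncomputable section

-- sign function
def sg : Fin 2 → ℂ := fun t => if t = 1 then -1 else 1

lemma pauli2_diag (x : Fin 2) : pauli 2 x x = sg x := by
  fin_cases x <;> simp [pauli, sg]

lemma pauli2_off {x y : Fin 2} (h : x ≠ y) : pauli 2 x y = 0 := by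
  fin_cases x <;> fin_cases y <;> simp_all [pauli]

lemma perm_sum_two (n : ℕ) (g : Fin (n+2) → ℂ) :
    ∑ σ : Equiv.Perm (Fin (n+2)), g (σ 0) * g (σ 1)
      = (n.factorial : ℂ) * ((∑ a, g a)^2 - ∑ a, g a * g a) := by
  rw [← Equiv.sum_comp (Equiv.Perm.decomposeFin.symm) (fun σ => g (σ 0) * g (σ 1))]
  rw [Fintype.sum_prod_type]
  simp only [Equiv.Perm.decomposeFin_symm_apply_zero, Equiv.Perm.decomposeFin_symm_apply_one]
  have inner : ∀ p : Fin (n+2),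
      ∑ e : Equiv.Perm (Fin (n+1)), g (Equiv.swap 0 p ((e 0).succ))
        = (n.factorial : ℂ) * ((∑ a, g a) - g p) := by
    intro p
    rw [← Equiv.sum_comp (Equiv.Perm.decomposeFin.symm)
      (fun e : Equiv.Perm (Fin (n+1)) => g (Equiv.swap 0 p ((e 0).succ)))]
    rw [Fintype.sum_prod_type]
    simp only [Equiv.Perm.decomposeFin_symm_apply_zero]
    rw [Finset.sum_comm]
    simp only [Finset.sum_const, Finset.card_univ, Fintype.card_perm, Fintype.card_fin]
    have h1 : ∑ q : Fin (n+1), g (Equiv.swap 0 p q.succ)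
        = (∑ a, g a) - g p := by
      have h2 : ∑ x : Fin (n+2), g (Equiv.swap 0 p x)
          = g (Equiv.swap 0 p 0) + ∑ q : Fin (n+1), g (Equiv.swap 0 p q.succ) :=
        Fin.sum_univ_succ _
      rw [Equiv.sum_comp (Equiv.swap 0 p) g, Equiv.swap_apply_left] at h2
      rw [eq_sub_iff_add_eq, add_comm]
      exact h2.symm
    rw [nsmul_eq_mul, h1]
  have h3 : ∀ p : Fin (n+2), ∑ e : Equiv.Perm (Fin (n+1)),
      g p * g (Equiv.swap 0 p ((e 0).succ))
        = g p * ((n.factorial : ℂ) * ((∑ a, g a) - g p)) := fun p => by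
    rw [← Finset.mul_sum, inner p]
  simp only [h3]
  calc ∑ p, g p * ((n.factorial : ℂ) * ((∑ a, g a) - g p))
      = (n.factorial : ℂ) * ∑ p, (g p * (∑ a, g a) - g p * g p) := by
        rw [Finset.mul_sum]; exact Finset.sum_congr rfl (fun p _ => by ring)
    _ = (n.factorial : ℂ) * ((∑ a, g a)^2 - ∑ a, g a * g a) := by
        rw [Finset.sum_sub_distrib, ← Finset.sum_mul]; ring

/-- for `N ≥ 2` and `0 ≤ k ≤ N`, the Dicke vector `|k, N−k⟩` is an
eigenvector of `S_{2,N}(σ₃⊗σ₃)` with eigenvalue `((N−2k)² − N)/(N(N−1))`. -/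
theorem dicke_eigenvector_SMN_sigma3_sigma3 (N k : ℕ) (hN : 2 ≤ N) (hk : k ≤ N) :
    (SMN 2 N (pauliTensor fun _ : Fin 2 => (2 : Fin 3))).mulVec (dicke N k) =
      (((((N : ℝ) - 2 * k) ^ 2 - N) / (N * ((N : ℝ) - 1)) : ℝ) : ℂ) • dicke N k := by
  obtain ⟨n, rfl⟩ : ∃ n, N = n + 2 := ⟨N - 2, by omega⟩
  set N := n + 2 with hNdef
  have e0 : Fin.castLE hN (0 : Fin 2) = (0 : Fin N) := by
    apply Fin.ext; simp
  have e1 : Fin.castLE hN (1 : Fin 2) = (1 : Fin N) := by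
    apply Fin.ext; simp; rw [Nat.mod_eq_of_lt (by omega)]
  -- the embedded matrix is diagonal
  have hA : ∀ a b : Fin N → Fin 2,
      embedMat 2 N (pauliTensor fun _ : Fin 2 => (2 : Fin 3)) a b
        = if a = b then sg (a 0) * sg (a 1) else 0 := by
    intro a b
    rw [embedMat, dif_pos hN]
    show pauliTensor (fun _ : Fin 2 => (2:Fin 3)) (fun t => a (Fin.castLE hN t))
        (fun t => b (Fin.castLE hN t)) * _ = _
    by_cases hab : a = b
    · subst hab
      rw [if_pos rfl]
      have hprod : (∏ t ∈ Finset.univ.filter (fun t : Fin N => 2 ≤ (t : ℕ)),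
          (if a t = a t then (1:ℂ) else 0)) = 1 :=
        Finset.prod_eq_one (fun _ _ => if_pos rfl)
      rw [hprod, mul_one, pauliTensor]
      show (∏ t : Fin 2, pauli 2 (a (Fin.castLE hN t)) (a (Fin.castLE hN t))) = _
      rw [Fin.prod_univ_two, e0, e1, pauli2_diag, pauli2_diag]
    · rw [if_neg hab]
      obtain ⟨t, ht⟩ := Function.ne_iff.mp hab
      by_cases h2 : (t : ℕ) < 2
      · apply mul_eq_zero_of_left
        rw [pauliTensor]
        show (∏ u : Fin 2, pauli 2 (a (Fin.castLE hN u)) (b (Fin.castLE hN u))) = 0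
        refine Finset.prod_eq_zero (Finset.mem_univ (⟨(t : ℕ), h2⟩ : Fin 2)) ?_
        have hct : Fin.castLE hN (⟨(t : ℕ), h2⟩ : Fin 2) = t := by apply Fin.ext; rfl
        rw [hct]
        exact pauli2_off ht
      · apply mul_eq_zero_of_right
        refine Finset.prod_eq_zero (Finset.mem_filter.mpr ⟨Finset.mem_univ t, by omega⟩) ?_
        exact if_neg ht
  funext i
  have hcomp : ∀ (j : Fin N → Fin 2) (σ : Equiv.Perm (Fin N)), (i ∘ σ = j ∘ σ) ↔ i = j := by
    intro j σ
    constructor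
    · intro h; funext x
      have := congrFun h (σ.symm x)
      simpa using this
    · rintro rfl; rfl
  have hM : ∀ j, SMN 2 N (pauliTensor fun _ : Fin 2 => (2 : Fin 3)) i j
      = if i = j then
          ((N.factorial : ℂ))⁻¹ * ∑ σ : Equiv.Perm (Fin N), sg (i (σ 0)) * sg (i (σ 1))
        else 0 := by
    intro j
    rw [SMN, symmMat]
    show (N.factorial : ℂ)⁻¹ * (∑ σ : Equiv.Perm (Fin N),
        Matrix.of (fun a b => embedMat 2 N _ (a ∘ σ) (b ∘ σ))) i j = _
    have hsummand : ∀ σ : Equiv.Perm (Fin N),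
        embedMat 2 N (pauliTensor fun _ : Fin 2 => (2:Fin 3)) (i ∘ σ) (j ∘ σ)
          = if i = j then sg (i (σ 0)) * sg (i (σ 1)) else 0 := fun σ => by
      rw [hA]; exact if_congr (hcomp j σ) rfl rfl
    rw [Matrix.sum_apply i j Finset.univ
      (fun σ : Equiv.Perm (Fin N) => Matrix.of fun a b =>
        embedMat 2 N (pauliTensor fun _ : Fin 2 => (2:Fin 3)) (a ∘ σ) (b ∘ σ))]
    simp only [Matrix.of_apply, hsummand]
    by_cases hij : i = j
    · subst hij; simp
    · simp only [if_neg hij, Finset.sum_const_zero, mul_zero]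
  show ∑ j, SMN 2 N (pauliTensor fun _ : Fin 2 => (2 : Fin 3)) i j * dicke N k j = _
  simp only [hM, ite_mul, zero_mul]
  rw [Finset.sum_ite_eq, if_pos (Finset.mem_univ i)]
  show _ = (((((N : ℝ) - 2 * k) ^ 2 - N) / (N * ((N : ℝ) - 1)) : ℝ) : ℂ) * dicke N k i
  rw [dicke]
  by_cases hcard : (Finset.univ.filter fun t => i t = 1).card = k
  · simp only [if_pos hcard]
    congr 1
    -- compute the eigenvalue
    rw [perm_sum_two n (fun a => sg (i a))]
    have hT : ∑ a : Fin N, sg (i a) * sg (i a) = (N : ℂ) := by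
      have h1 : ∀ a : Fin N, sg (i a) * sg (i a) = 1 := fun a => by
        by_cases h : i a = 1 <;> simp [sg, h]
      simp only [h1, Finset.sum_const, Finset.card_univ, Fintype.card_fun,
        Fintype.card_fin, nsmul_eq_mul, mul_one]
    have hS : ∑ a : Fin N, sg (i a) = (N : ℂ) - 2 * k := by
      have h1 : ∀ a : Fin N, sg (i a) = 1 - 2 * (if i a = 1 then (1:ℂ) else 0) :=
        fun a => by by_cases h : i a = 1 <;> simp [sg, h] <;> norm_num
      simp only [h1]
      rw [Finset.sum_sub_distrib, Finset.sum_const, ← Finset.mul_sum, Finset.sum_boole]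
      rw [hcard]
      simp [Finset.card_univ]
    rw [hT, hS]
    have hfac : (N.factorial : ℂ) = ((n:ℂ)+2) * ((n:ℂ)+1) * (n.factorial : ℂ) := by
      show (((n+2).factorial : ℕ) : ℂ) = _
      rw [Nat.factorial_succ, Nat.factorial_succ]
      push_cast; ring
    have hne : (n.factorial : ℂ) ≠ 0 := Nat.cast_ne_zero.mpr n.factorial_ne_zero
    have h2 : ((n:ℂ)+2) ≠ 0 := by
      have := Nat.cast_ne_zero (R := ℂ).mpr (show n+2 ≠ 0 by omega)
      push_cast at this; exact this
    have h1' : ((n:ℂ)+1) ≠ 0 := by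
      have := Nat.cast_ne_zero (R := ℂ).mpr (show n+1 ≠ 0 by omega)
      push_cast at this; exact this
    have hRHS : (((((N : ℝ) - 2 * k) ^ 2 - N) / (N * ((N : ℝ) - 1)) : ℝ) : ℂ)
        = ((((n:ℂ)+2) - 2*k)^2 - ((n:ℂ)+2)) / ((((n:ℂ)+2)) * ((n:ℂ)+1)) := by
      push_cast [hNdef]; ring_nf
    have hNc : (N : ℂ) = (n:ℂ) + 2 := by push_cast [hNdef]; ring
    rw [hfac, hRHS, hNc]
    field_simp
  · simp only [if_neg hcard, mul_zero]


end
end
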